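/- Let H be a Hilbert algebra and a₁,…,aₙ,b ∈ H (n ≥ 1). Then (φ(a₁) ∩ ⋯ ∩ φ(aₙ)) ⇒ φ(b) = φ(a₁→(a₂→⋯(aₙ→b)⋯)). Consequently, the collection FC(H) of all finite nonempty intersections of sets φ(a) is closed under the operation ⇒, and hence (FC(H), ∩, ⇒, X(H)) is an implicative semilattice. -/

import Mathlib

/-- A Hilbert algebra `(H, →, 1)`. -/
structure HilbertAlgebra (H : Type*) where
  imp : H → H → H
  one : H
  ax1 : ∀ a b : H, imp a (imp b a) = one
  ax2 : ∀ a b c : H, imp (imp a (imp b c)) (imp (imp a b) (imp a c)) = one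
  ax3 : ∀ a b : H, imp a b = one → imp b a = one → a = b

namespace HilbertAlgebra

variable {H : Type*} (hH : HilbertAlgebra H)

/-- The natural order: `a ≤ b` iff `a → b = 1`. -/
def le (a b : H) : Prop := hH.imp a b = hH.one

/-- Implicative filter. -/
def IsImplicativeFilter (F : Set H) : Prop :=
  hH.one ∈ F ∧ ∀ a b : H, a ∈ F → hH.imp a b ∈ F → b ∈ F

/-- Irreducible implicative filter. -/
def IsIrreducible (F : Set H) : Prop :=
  hH.IsImplicativeFilter F ∧ F ≠ Set.univ ∧
    ∀ F₁ F₂ : Set H, hH.IsImplicativeFilter F₁ → hH.IsImplicativeFilter F₂ →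
      F = F₁ ∩ F₂ → (F = F₁ ∨ F = F₂)

/-- Order-ideal: nonempty, downward closed, up-directed (w.r.t. the natural order). -/
def IsOrderIdeal (I : Set H) : Prop :=
  I.Nonempty ∧ (∀ a b : H, b ∈ I → hH.le a b → a ∈ I) ∧
    ∀ a b : H, a ∈ I → b ∈ I → ∃ c ∈ I, hH.le a c ∧ hH.le b c

/-- `φ(a) = {P ∈ X(H) : a ∈ P}`. -/
def phi (a : H) : Set (Set H) := {P | hH.IsIrreducible P ∧ a ∈ P}

/-- An upset of `X(H)` (the poset of irreducible implicative filters, ordered by `⊆`). -/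
def IsUpsetX (U : Set (Set H)) : Prop :=
  (∀ P ∈ U, hH.IsIrreducible P) ∧
    ∀ P Q : Set H, P ∈ U → hH.IsIrreducible Q → P ⊆ Q → Q ∈ U

/-- The Heyting implication `U ⇒ V` on upsets of `X(H)`. -/
def impUps (U V : Set (Set H)) : Set (Set H) :=
  {P | hH.IsIrreducible P ∧ ∀ Q : Set H, hH.IsIrreducible Q → P ⊆ Q → Q ∈ U → Q ∈ V}

/-- `FC(H)`: finite nonempty intersections of sets of the form `φ(a)`. -/
def FC : Set (Set (Set H)) :=
  {U | ∃ l : List H, l ≠ [] ∧ U = ⋂ a ∈ l, hH.phi a}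

/-- `X*(H)`: implicative filters that are intersections of finitely many (at least one)
irreducible implicative filters. -/
def XStar : Set (Set H) :=
  {F | ∃ S : Set (Set H), S.Finite ∧ S.Nonempty ∧ (∀ P ∈ S, hH.IsIrreducible P) ∧ F = ⋂₀ S}

/-- `Φ(a) = {F ∈ X*(H) : a ∈ F}`. -/
def Phi (a : H) : Set (Set H) := {F | F ∈ hH.XStar ∧ a ∈ F}

/-- An upset of `X*(H)` (ordered by `⊆`). -/
def IsUpsetXStar (U : Set (Set H)) : Prop :=
  (∀ F ∈ U, F ∈ hH.XStar) ∧
    ∀ F K : Set H, F ∈ U → K ∈ hH.XStar → F ⊆ K → K ∈ U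

/-- The implication `U ⇒ V` on upsets of `X*(H)`. -/
def impUpsStar (U V : Set (Set H)) : Set (Set H) :=
  {F | F ∈ hH.XStar ∧ ∀ K : Set H, K ∈ hH.XStar → F ⊆ K → K ∈ U → K ∈ V}

/-- Homomorphism of Hilbert algebras. -/
def IsHom {G : Type*} (hG : HilbertAlgebra G) (f : H → G) : Prop :=
  f hH.one = hG.one ∧ ∀ a b : H, f (hH.imp a b) = hG.imp (f a) (f b)

end HilbertAlgebra

/-- A Hilbert algebra with supremum: `(H, ∨)` is a join-semilattice whose induced
order has greatest element `1`, and `a → b = 1` iff `a ∨ b = b`. -/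
structure HilbertSup (H : Type*) extends HilbertAlgebra H where
  sup : H → H → H
  sup_comm : ∀ a b : H, sup a b = sup b a
  sup_assoc : ∀ a b c : H, sup (sup a b) c = sup a (sup b c)
  sup_idem : ∀ a : H, sup a a = a
  sup_one : ∀ a : H, sup a one = one
  imp_eq_one_iff : ∀ a b : H, imp a b = one ↔ sup a b = b

/-- Morphism of Hilbert algebras with supremum. -/
def HilbertSup.IsHomSup {H G : Type*} (hH : HilbertSup H) (hG : HilbertSup G)
    (f : H → G) : Prop :=
  hH.toHilbertAlgebra.IsHom hG.toHilbertAlgebra f ∧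
    ∀ a b : H, f (hH.sup a b) = hG.sup (f a) (f b)

/-- An implicative semilattice: a meet-semilattice with greatest element and a binary
operation `him` such that `a ⊓ b ≤ c ↔ a ≤ him b c`. -/
class ImplicativeSemilattice (G : Type*) extends SemilatticeInf G, OrderTop G where
  him : G → G → G
  inf_le_iff_le_him : ∀ a b c : G, a ⊓ b ≤ c ↔ a ≤ him b c


namespace HilbertAlgebra

variable {H : Type*} (hH : HilbertAlgebra H)

lemma eq_one_of_one_imp' {a : H} (h : hH.imp hH.one a = hH.one) : a = hH.one := by
  have k := hH.ax1 a hH.one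
  rw [h] at k
  exact hH.ax3 a hH.one k h

lemma imp_self' (a : H) : hH.imp a a = hH.one := by
  have s := hH.ax2 a (hH.imp a a) a
  rw [hH.ax1 a (hH.imp a a), hH.ax1 a a] at s
  exact hH.eq_one_of_one_imp' (hH.eq_one_of_one_imp' s)

lemma imp_one' (a : H) : hH.imp a hH.one = hH.one :=
  hH.eq_one_of_one_imp' (hH.ax1 hH.one a)

/-- `{b | x → b ∈ F}`. -/
def ext1 (x : H) (F : Set H) : Set H := {b | hH.imp x b ∈ F}

lemma ext1_filter {x : H} {F : Set H} (hF : hH.IsImplicativeFilter F) :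
    hH.IsImplicativeFilter (hH.ext1 x F) := by
  constructor
  · show hH.imp x hH.one ∈ F
    rw [hH.imp_one']; exact hF.1
  · intro a b ha hab
    have h2 : hH.imp (hH.imp x a) (hH.imp x b) ∈ F :=
      hF.2 _ _ hab (hH.ax2 x a b ▸ hF.1)
    exact hF.2 _ _ ha h2

lemma subset_ext1 {x : H} {F : Set H} (hF : hH.IsImplicativeFilter F) :
    F ⊆ hH.ext1 x F := fun b hb =>
  hF.2 b (hH.imp x b) hb (hH.ax1 b x ▸ hF.1)

lemma mem_ext1 {x : H} {F : Set H} (hF : hH.IsImplicativeFilter F) :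
    x ∈ hH.ext1 x F := by
  show hH.imp x x ∈ F
  rw [hH.imp_self']; exact hF.1

/-- `{b | (a₁→(a₂→⋯(aₙ→b))) ∈ F}`. -/
def extL (l : List H) (F : Set H) : Set H := {b | l.foldr hH.imp b ∈ F}

lemma extL_cons (x : H) (t : List H) (F : Set H) :
    hH.extL (x :: t) F = hH.extL t (hH.ext1 x F) := rfl

lemma extL_filter (l : List H) {F : Set H} (hF : hH.IsImplicativeFilter F) :
    hH.IsImplicativeFilter (hH.extL l F) ∧ F ⊆ hH.extL l F ∧
      ∀ a ∈ l, a ∈ hH.extL l F := by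
  induction l generalizing F with
  | nil => exact ⟨hF, fun _ h => h, fun a ha => absurd ha List.not_mem_nil⟩
  | cons x t ih =>
    obtain ⟨h1, h2, h3⟩ := ih (hH.ext1_filter hF)
    rw [hH.extL_cons]
    refine ⟨h1, (hH.subset_ext1 hF).trans h2, ?_⟩
    intro a ha
    rcases List.mem_cons.1 ha with rfl | ha
    · exact h2 (hH.mem_ext1 hF)
    · exact h3 a ha

lemma foldr_mp {F : Set H} (hF : hH.IsImplicativeFilter F) :
    ∀ l : List H, (∀ a ∈ l, a ∈ F) → ∀ b : H, l.foldr hH.imp b ∈ F → b ∈ F := by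
  intro l
  induction l with
  | nil => intro _ b hb; exact hb
  | cons x t ih =>
    intro h b hb
    exact ih (fun a ha => h a (List.mem_cons_of_mem x ha)) b
      (hF.2 x _ (h x List.mem_cons_self) hb)

lemma separation {F : Set H} (hF : hH.IsImplicativeFilter F) {b : H} (hb : b ∉ F) :
    ∃ P : Set H, hH.IsIrreducible P ∧ F ⊆ P ∧ b ∉ P := by
  set S : Set (Set H) := {G | hH.IsImplicativeFilter G ∧ F ⊆ G ∧ b ∉ G} with hS
  have hzorn : ∀ c ⊆ S, IsChain (· ⊆ ·) c → c.Nonempty → ∃ ub ∈ S, ∀ s ∈ c, s ⊆ ub := by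
    intro c hc hchain ⟨G0, hG0⟩
    refine ⟨⋃₀ c, ⟨⟨?_, ?_⟩, ?_, ?_⟩, fun s hs => Set.subset_sUnion_of_mem hs⟩
    · exact ⟨G0, hG0, (hc hG0).1.1⟩
    · rintro a d ⟨G1, hG1, ha⟩ ⟨G2, hG2, had⟩
      rcases hchain.total hG1 hG2 with h | h
      · exact ⟨G2, hG2, (hc hG2).1.2 a d (h ha) had⟩
      · exact ⟨G1, hG1, (hc hG1).1.2 a d ha (h had)⟩
    · exact (hc hG0).2.1.trans (Set.subset_sUnion_of_mem hG0)
    · rintro ⟨G, hG, hbG⟩; exact (hc hG).2.2 hbG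
  obtain ⟨M, hFM, hM⟩ := zorn_subset_nonempty S hzorn F ⟨hF, subset_rfl, hb⟩
  obtain ⟨⟨hMf, hFM', hbM⟩, hmax⟩ := hM
  refine ⟨M, ⟨hMf, ?_, ?_⟩, hFM, hbM⟩
  · intro h; exact hbM (h ▸ Set.mem_univ b)
  · intro F₁ F₂ h1 h2 hMeq
    by_contra hcon
    push_neg at hcon
    have hb1 : b ∈ F₁ := by
      by_contra hb1
      have : F₁ ⊆ M := hmax ⟨h1, hFM'.trans (hMeq ▸ Set.inter_subset_left), hb1⟩
        (hMeq ▸ Set.inter_subset_left)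
      exact hcon.1 (subset_antisymm (hMeq ▸ Set.inter_subset_left) this)
    have hb2 : b ∈ F₂ := by
      by_contra hb2
      have : F₂ ⊆ M := hmax ⟨h2, hFM'.trans (hMeq ▸ Set.inter_subset_right), hb2⟩
        (hMeq ▸ Set.inter_subset_right)
      exact hcon.2 (subset_antisymm (hMeq ▸ Set.inter_subset_right) this)
    exact hbM (hMeq ▸ ⟨hb1, hb2⟩)

/-- Main key lemma. -/
lemma key (l : List H) (b : H) :
    hH.impUps (⋂ a ∈ l, hH.phi a) (hH.phi b) = hH.phi (l.foldr hH.imp b) := by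
  ext P
  constructor
  · rintro ⟨hP, hImp⟩
    refine ⟨hP, ?_⟩
    by_contra hc
    have hbE : b ∉ hH.extL l P := hc
    obtain ⟨hEf, hPE, hmem⟩ := hH.extL_filter l hP.1
    obtain ⟨Q, hQ, hEQ, hbQ⟩ := hH.separation hEf hbE
    have hQU : Q ∈ ⋂ a ∈ l, hH.phi a :=
      Set.mem_iInter₂.2 fun a ha => ⟨hQ, hEQ (hmem a ha)⟩
    exact hbQ (hImp Q hQ (hPE.trans hEQ) hQU).2
  · rintro ⟨hP, hc⟩
    refine ⟨hP, fun Q hQ hPQ hQU => ⟨hQ, ?_⟩⟩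
    exact hH.foldr_mp hQ.1 l (fun a ha => (Set.mem_iInter₂.1 hQU a ha).2) b (hPQ hc)

lemma FC_irred {U : Set (Set H)} (hU : U ∈ hH.FC) {P : Set H} (hP : P ∈ U) :
    hH.IsIrreducible P := by
  obtain ⟨l, hl, rfl⟩ := hU
  obtain ⟨a, ha⟩ := List.exists_mem_of_ne_nil l hl
  exact (Set.mem_iInter₂.1 hP a ha).1

lemma FC_upset {U : Set (Set H)} (hU : U ∈ hH.FC) {P Q : Set H} (hP : P ∈ U)
    (hQ : hH.IsIrreducible Q) (hPQ : P ⊆ Q) : Q ∈ U := by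
  obtain ⟨l, hl, rfl⟩ := hU
  exact Set.mem_iInter₂.2 fun a ha => ⟨hQ, hPQ (Set.mem_iInter₂.1 hP a ha).2⟩

lemma impUps_iInter (U : Set (Set H)) (l : List H) (hl : l ≠ []) :
    hH.impUps U (⋂ b ∈ l, hH.phi b) = ⋂ b ∈ l, hH.impUps U (hH.phi b) := by
  ext P
  constructor
  · rintro ⟨hP, hImp⟩
    exact Set.mem_iInter₂.2 fun c hc =>
      ⟨hP, fun Q hQ hPQ hQU => Set.mem_iInter₂.1 (hImp Q hQ hPQ hQU) c hc⟩
  · intro h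
    obtain ⟨c0, hc0⟩ := List.exists_mem_of_ne_nil l hl
    refine ⟨(Set.mem_iInter₂.1 h c0 hc0).1, fun Q hQ hPQ hQU => ?_⟩
    exact Set.mem_iInter₂.2 fun c hc => (Set.mem_iInter₂.1 h c hc).2 Q hQ hPQ hQU

end HilbertAlgebra

theorem stmt_8 {H : Type*} (hH : HilbertAlgebra H) :
    (∀ (l : List H) (b : H), l ≠ [] →
      hH.impUps (⋂ a ∈ l, hH.phi a) (hH.phi b) = hH.phi (l.foldr hH.imp b)) ∧
    (∀ U V : Set (Set H), U ∈ hH.FC → V ∈ hH.FC → hH.impUps U V ∈ hH.FC) ∧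
    (∀ U V : Set (Set H), U ∈ hH.FC → V ∈ hH.FC → U ∩ V ∈ hH.FC) ∧
    ({P : Set H | hH.IsIrreducible P} ∈ hH.FC) ∧
    (∀ U V W : Set (Set H), U ∈ hH.FC → V ∈ hH.FC → W ∈ hH.FC →
      (U ∩ V ⊆ W ↔ U ⊆ hH.impUps V W)) := by
  refine ⟨fun l b _ => hH.key l b, ?_, ?_, ?_, ?_⟩
  · rintro U V ⟨lU, hlU, rfl⟩ ⟨lV, hlV, rfl⟩
    refine ⟨lV.map (fun b => lU.foldr hH.imp b), by simp [hlV], ?_⟩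
    rw [hH.impUps_iInter _ lV hlV]
    simp only [hH.key lU]
    ext P
    simp only [Set.mem_iInter, List.mem_map]
    constructor
    · rintro h c ⟨x, hx, rfl⟩
      exact h x hx
    · intro h x hx
      exact h _ ⟨x, hx, rfl⟩
  · rintro U V ⟨lU, hlU, rfl⟩ ⟨lV, hlV, rfl⟩
    refine ⟨lU ++ lV, by simp [hlU], ?_⟩
    ext P
    simp only [Set.mem_inter_iff, Set.mem_iInter, List.mem_append]
    constructor
    · rintro ⟨h1, h2⟩ a ha
      rcases ha with ha | ha
      · exact h1 a ha
      · exact h2 a ha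
    · intro h
      exact ⟨fun a ha => h a (Or.inl ha), fun a ha => h a (Or.inr ha)⟩
  · refine ⟨[hH.one], by simp, ?_⟩
    ext P
    simp only [Set.mem_setOf_eq, List.mem_singleton, Set.mem_iInter]
    constructor
    · intro h a ha
      subst ha
      exact ⟨h, h.1.1⟩
    · intro h
      exact (h hH.one rfl).1
  · intro U V W hU hV hW
    constructor
    · intro h P hP
      exact ⟨hH.FC_irred hU hP, fun Q hQ hPQ hQV => h ⟨hH.FC_upset hU hP hQ hPQ, hQV⟩⟩
    · rintro h P ⟨hPU, hPV⟩
      exact (h hPU).2 P (hH.FC_irred hU hPU) subset_rfl hPV
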